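/- Let A and B be relational structures with countably infinite domains Ω and Ω′ whose automorphism groups Aut(A) and Aut(B) are oligomorphic (i.e., A and B are ω-categorical) and act without algebraicity. Then every topological group isomorphism φ: Aut(A) → Aut(B) (a group isomorphism that is a homeomorphism with respect to the topologies of pointwise convergence) is an isomorphism of permutation group actions: there exists a bijection θ: Ω → Ω′ such that φ(g) = θ∘g∘θ⁻¹ for all g ∈ Aut(A). -/

import Mathlib

/-- The topology of pointwise convergence on functions `α → β`
(product topology with `β` discrete). -/
def FnTop (α β : Type*) : TopologicalSpace (α → β) :=
  @Pi.topologicalSpace α (fun _ => β) (fun _ => ⊥)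

/-- The coordinatewise action of a permutation on tuples. -/
def tAct {Ω : Type*} (g : Equiv.Perm Ω) {n : ℕ} (u : Fin n → Ω) : Fin n → Ω :=
  fun i => g (u i)

/-- The action of a permutation on sets of tuples. -/
def sAct {Ω : Type*} (g : Equiv.Perm Ω) {n : ℕ} (c : Set (Fin n → Ω)) : Set (Fin n → Ω) :=
  tAct g '' c

/-- A set of permutations is oligomorphic if for every `n` its coordinatewise
action on `n`-tuples has finitely many orbits. -/
def Oligo {Ω : Type*} (G : Set (Equiv.Perm Ω)) : Prop :=
  ∀ n : ℕ, Set.Finite {o : Set (Fin n → Ω) | ∃ t : Fin n → Ω, o = {s | ∃ g ∈ G, s = tAct g t}}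

/-- `G` acts without algebraicity on `Ω`: if the orbit of `a` under the pointwise
stabiliser of a finite tuple `y` is finite, then `a` is an entry of `y`. -/
def NoAlg {Ω : Type*} (G : Set (Equiv.Perm Ω)) : Prop :=
  ∀ (m : ℕ) (y : Fin m → Ω) (a : Ω),
    Set.Finite {b : Ω | ∃ g ∈ G, (∀ i, g (y i) = y i) ∧ b = g a} → ∃ i, a = y i

/-- `G` is topologically closed in the space of permutations with the topology of
pointwise convergence. -/
def TopClosedPerm {Ω : Type*} (G : Set (Equiv.Perm Ω)) : Prop :=
  @IsClosed (Ω → Ω) (FnTop Ω Ω) {f | ∃ g ∈ G, f = ⇑g}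

/-- The `r`-equivalence class of a tuple `u ∈ U`. -/
def cls {Ω : Type*} {n : ℕ} (U : Set (Fin n → Ω))
    (r : (Fin n → Ω) → (Fin n → Ω) → Prop) (u : Fin n → Ω) : Set (Fin n → Ω) :=
  {v ∈ U | r u v}

/-- The quotient `B = U/∼`, realised as the set of equivalence classes. -/
def classes {Ω : Type*} {n : ℕ} (U : Set (Fin n → Ω))
    (r : (Fin n → Ω) → (Fin n → Ω) → Prop) : Set (Set (Fin n → Ω)) :=
  {c | ∃ u ∈ U, c = cls U r u}

/-- `a` entangles the class `c` if `a` is an entry of every tuple in `c`. -/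
def Entangles {Ω : Type*} {n : ℕ} (a : Ω) (c : Set (Fin n → Ω)) : Prop :=
  ∀ v ∈ c, ∃ i, v i = a

/-- `a` strongly entangles `c ∈ B` if it entangles `c` and no other element of `B`. -/
def StronglyEntangles {Ω : Type*} {n : ℕ} (B : Set (Set (Fin n → Ω))) (a : Ω)
    (c : Set (Fin n → Ω)) : Prop :=
  Entangles a c ∧ ∀ c' ∈ B, Entangles a c' → c' = c

/-- `a` is algebraic over `c`: the orbit of `a` under the stabiliser `G_c` is finite. -/
def AlgebraicOver {Ω : Type*} {n : ℕ} (G : Set (Equiv.Perm Ω)) (a : Ω)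
    (c : Set (Fin n → Ω)) : Prop :=
  Set.Finite {b : Ω | ∃ g ∈ G, sAct g c = c ∧ b = g a}

/-- `B` is dense: for every `a ∈ Ω` there are `c₁,…,c_k ∈ B` whose joint stabiliser
is contained in the stabiliser of `a`. -/
def DenseClasses {Ω : Type*} {n : ℕ} (G : Set (Equiv.Perm Ω))
    (B : Set (Set (Fin n → Ω))) : Prop :=
  ∀ a : Ω, ∃ (k : ℕ) (cc : Fin k → Set (Fin n → Ω)),
    (∀ i, cc i ∈ B) ∧ ∀ g ∈ G, (∀ i, sAct g (cc i) = cc i) → g a = a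

/-- The induced action of `G` on `B` is without algebraicity. -/
def NoAlgOn {Ω : Type*} {n : ℕ} (G : Set (Equiv.Perm Ω))
    (B : Set (Set (Fin n → Ω))) : Prop :=
  ∀ (m : ℕ) (cc : Fin m → Set (Fin n → Ω)) (c : Set (Fin n → Ω)),
    (∀ i, cc i ∈ B) → c ∈ B →
    Set.Finite {c' | ∃ g ∈ G, (∀ i, sAct g (cc i) = cc i) ∧ c' = sAct g c} →
    ∃ i, c = cc i

open FirstOrder Language Structure in
/-- A permutation is an automorphism of the `L`-structure `Ω` if it preserves
every relation and its complement. -/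
def IsAutPerm (L : FirstOrder.Language) (Ω : Type*) [L.Structure Ω] (g : Equiv.Perm Ω) : Prop :=
  ∀ (n : ℕ) (R : L.Relations n) (t : Fin n → Ω), RelMap R (⇑g ∘ t) ↔ RelMap R t

open FirstOrder Language Structure in
/-- The automorphism group of the `L`-structure `Ω`, as a subgroup of `Equiv.Perm Ω`. -/
def autGroup (L : FirstOrder.Language) (Ω : Type*) [L.Structure Ω] : Subgroup (Equiv.Perm Ω) where
  carrier := {g | IsAutPerm L Ω g}
  one_mem' := by
    intro n R t
    exact Iff.rfl
  mul_mem' := by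
    intro a b ha hb n R t
    have h1 : ⇑(a * b) ∘ t = ⇑a ∘ (⇑b ∘ t) := by
      ext i; simp [Equiv.Perm.mul_apply]
    rw [h1]
    exact (ha n R (⇑b ∘ t)).trans (hb n R t)
  inv_mem' := by
    intro a ha n R t
    have h := ha n R (⇑a⁻¹ ∘ t)
    have h2 : ⇑a ∘ (⇑a⁻¹ ∘ t) = t := by ext i; simp
    rw [h2] at h
    exact h.symm

/-- The topology of pointwise convergence on the automorphism group. -/
def autTop (L : FirstOrder.Language) (Ω : Type*) [L.Structure Ω] :
    TopologicalSpace (autGroup L Ω) :=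
  TopologicalSpace.induced (fun g => ((g : Equiv.Perm Ω) : Ω → Ω)) (FnTop Ω Ω)


/-- Orbit of `a` under a set `V` of group elements, acting via `ρ`. -/
def orbSet {G : Type*} [Group G] {X : Type*} (ρ : G →* Equiv.Perm X)
    (V : Set G) (a : X) : Set X :=
  {x | ∃ g ∈ V, x = ρ g a}

/-- Pointwise fixer of a finite set. -/
def fixSet {G : Type*} [Group G] {X : Type*} (ρ : G →* Equiv.Perm X)
    (S : Finset X) : Set G :=
  {g | ∀ x ∈ S, ρ g x = x}

/-- Stabiliser of a point. -/
def ptStab {G : Type*} [Group G] {X : Type*} (ρ : G →* Equiv.Perm X)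
    (a : X) : Set G :=
  {g | ρ g a = a}

/-- No-algebraicity hypothesis, Finset form. -/
def NAh {G : Type*} [Group G] {X : Type*} (ρ : G →* Equiv.Perm X) : Prop :=
  ∀ (S : Finset X) (a : X), (orbSet ρ (fixSet ρ S) a).Finite → a ∈ S

/-- Support hypothesis: every point of `X'` has a finite support in `X`. -/
def SPh {G : Type*} [Group G] {X X' : Type*} (ρ : G →* Equiv.Perm X)
    (ρ' : G →* Equiv.Perm X') : Prop :=
  ∀ b : X', ∃ S : Finset X, fixSet ρ S ⊆ ptStab ρ' b

lemma perm_inv_apply_self {α : Type*} (f : Equiv.Perm α) (x : α) : f⁻¹ (f x) = x :=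
  Equiv.Perm.inv_eq_iff_eq.mpr rfl

lemma perm_apply_inv_self {α : Type*} (f : Equiv.Perm α) (x : α) : f (f⁻¹ x) = x :=
  (Equiv.eq_symm_apply f).mp rfl

section Core
variable {G : Type*} [Group G] {X X' : Type*}

lemma ptStab_inv (ρ : G →* Equiv.Perm X) {a : X} {g : G}
    (h : g ∈ ptStab ρ a) : g⁻¹ ∈ ptStab ρ a := by
  show ρ g⁻¹ a = a
  have h' : ρ g a = a := h
  rw [map_inv]
  nth_rewrite 1 [← h']
  exact perm_inv_apply_self _ _

/-- Composition of finite orbits. -/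
lemma orb_comp {X₁ X₂ : Type*} (ρ₁ : G →* Equiv.Perm X₁) (ρ₂ : G →* Equiv.Perm X₂)
    (V : Set G) {x : X₁} {p : X₂}
    (h1 : (orbSet ρ₂ V p).Finite) (h2 : (orbSet ρ₁ (ptStab ρ₂ p) x).Finite) :
    (orbSet ρ₁ V x).Finite := by
  classical
  have hrep : ∀ q ∈ orbSet ρ₂ V p, ∃ g, g ∈ V ∧ q = ρ₂ g p := fun q h => h
  choose! rep hrepV hrepEq using hrep
  have hsub : orbSet ρ₁ V x ⊆
      ⋃ q ∈ orbSet ρ₂ V p, (fun y => ρ₁ (rep q) y) '' (orbSet ρ₁ (ptStab ρ₂ p) x) := by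
    rintro y ⟨g, hg, rfl⟩
    have hq : ρ₂ g p ∈ orbSet ρ₂ V p := ⟨g, hg, rfl⟩
    have hrEq : ρ₂ g p = ρ₂ (rep (ρ₂ g p)) p := hrepEq _ hq
    set r := rep (ρ₂ g p) with hr
    have hstab : r⁻¹ * g ∈ ptStab ρ₂ p := by
      show ρ₂ (r⁻¹ * g) p = p
      rw [map_mul, map_inv, Equiv.Perm.mul_apply, hrEq, perm_inv_apply_self]
    refine Set.mem_biUnion hq ⟨ρ₁ (r⁻¹ * g) x, ⟨r⁻¹ * g, hstab, rfl⟩, ?_⟩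
    show ρ₁ r (ρ₁ (r⁻¹ * g) x) = ρ₁ g x
    rw [← Equiv.Perm.mul_apply, ← map_mul, mul_inv_cancel_left]
  exact (h1.biUnion (fun q _ => h2.image _)).subset hsub

/-- Step 1: every `a` has some `b` whose stabiliser moves `a` only finitely. -/
lemma step1 (ρ : G →* Equiv.Perm X) (ρ' : G →* Equiv.Perm X')
    (hNA : NAh ρ) (hSP : SPh ρ ρ') (hSP' : SPh ρ' ρ) (a : X) :
    ∃ b : X', (orbSet ρ (ptStab ρ' b) a).Finite := by
  classical
  obtain ⟨T, hT⟩ := hSP' a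
  by_cases hf : ∃ b ∈ T, ∀ S : Finset X, fixSet ρ S ⊆ ptStab ρ' b → a ∈ S
  · obtain ⟨b, _, hforced⟩ := hf
    obtain ⟨S, hS⟩ := hSP b
    refine ⟨b, Set.Finite.subset S.finite_toSet ?_⟩
    rintro y ⟨g, hg, rfl⟩
    have hkey : fixSet ρ (S.image fun z => ρ g⁻¹ z) ⊆ ptStab ρ' b := by
      intro k hk
      have hconj : g * k * g⁻¹ ∈ fixSet ρ S := by
        intro z hz
        have h1 : ρ k (ρ g⁻¹ z) = ρ g⁻¹ z :=
          hk _ (Finset.mem_image_of_mem _ hz)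
        show ρ (g * k * g⁻¹) z = z
        rw [map_mul, map_mul, Equiv.Perm.mul_apply, Equiv.Perm.mul_apply,
          h1, map_inv, perm_apply_inv_self]
      have hb1 : ρ' (g * k * g⁻¹) b = b := hS hconj
      have hg' : ρ' g b = b := hg
      have hinvb : (ρ' g)⁻¹ b = b := by
        nth_rewrite 1 [← hg']; exact perm_inv_apply_self _ _
      simp only [map_mul, map_inv, Equiv.Perm.mul_apply] at hb1
      rw [hinvb] at hb1
      show ρ' k b = b
      calc ρ' k b = (ρ' g)⁻¹ (ρ' g (ρ' k b)) := (perm_inv_apply_self _ _).symm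
        _ = (ρ' g)⁻¹ b := by rw [hb1]
        _ = b := hinvb
    have hmem := hforced _ hkey
    obtain ⟨z, hz, hza⟩ := Finset.mem_image.mp hmem
    have hgz : ρ g a = z := by
      rw [← hza, map_inv]; exact perm_apply_inv_self _ _
    rw [hgz]; exact hz
  · push_neg at hf
    exfalso
    have hf' : ∀ b : X', ∃ S : Finset X,
        b ∈ T → (fixSet ρ S ⊆ ptStab ρ' b ∧ a ∉ S) := by
      intro b
      by_cases h : b ∈ T
      · obtain ⟨S, h1, h2⟩ := hf b h
        exact ⟨S, fun _ => ⟨h1, h2⟩⟩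
      · exact ⟨∅, fun hh => absurd hh h⟩
    choose F hF using hf'
    have horb : orbSet ρ (fixSet ρ (T.biUnion F)) a ⊆ {a} := by
      rintro y ⟨g, hg, rfl⟩
      have hgT : g ∈ fixSet ρ' T := by
        intro b hb
        exact (hF b hb).1 (fun z hz => hg z (Finset.mem_biUnion.mpr ⟨b, hb, hz⟩))
      have : ρ g a = a := hT hgT
      simp [this]
    have hmem : a ∈ T.biUnion F :=
      hNA _ a ((Set.finite_singleton a).subset horb)
    obtain ⟨b, hb, haF⟩ := Finset.mem_biUnion.mp hmem
    exact (hF b hb).2 haF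

end Core

section KeyThm
variable {G : Type*} [Group G] {X X' : Type*}

/-- The pairing relation: each stabiliser moves the other point only finitely. -/
def Pair (ρ : G →* Equiv.Perm X) (ρ' : G →* Equiv.Perm X') (a : X) (b : X') : Prop :=
  (orbSet ρ (ptStab ρ' b) a).Finite ∧ (orbSet ρ' (ptStab ρ a) b).Finite

lemma fixSet_singleton_eq (ρ : G →* Equiv.Perm X) (a : X) :
    fixSet ρ ({a} : Finset X) = ptStab ρ a := by
  ext g; simp [fixSet, ptStab]

lemma pair_total (ρ : G →* Equiv.Perm X) (ρ' : G →* Equiv.Perm X')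
    (hNA : NAh ρ) (hNA' : NAh ρ') (hSP : SPh ρ ρ') (hSP' : SPh ρ' ρ) (a : X) :
    ∃ b : X', Pair ρ ρ' a b := by
  obtain ⟨b₁, hb₁⟩ := step1 ρ ρ' hNA hSP hSP' a
  obtain ⟨a₂, ha₂⟩ := step1 ρ' ρ hNA' hSP' hSP b₁
  have hfin : (orbSet ρ (ptStab ρ a₂) a).Finite :=
    orb_comp ρ ρ' (ptStab ρ a₂) ha₂ hb₁
  have haa : a ∈ ({a₂} : Finset X) := by
    apply hNA {a₂} a
    rwa [fixSet_singleton_eq]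
  have : a = a₂ := by simpa using haa
  subst this
  exact ⟨b₁, hb₁, ha₂⟩

lemma pair_uniq_right (ρ : G →* Equiv.Perm X) (ρ' : G →* Equiv.Perm X')
    (hNA' : NAh ρ') {a : X} {b b' : X'}
    (h : Pair ρ ρ' a b) (h' : Pair ρ ρ' a b') : b' = b := by
  have hfin : (orbSet ρ' (ptStab ρ' b) b').Finite :=
    orb_comp ρ' ρ (ptStab ρ' b) h.1 h'.2
  have : b' ∈ ({b} : Finset X') := by
    apply hNA' {b} b'
    rwa [fixSet_singleton_eq]
  simpa using this

lemma pair_uniq_left (ρ : G →* Equiv.Perm X) (ρ' : G →* Equiv.Perm X')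
    (hNA : NAh ρ) {a a' : X} {b : X'}
    (h : Pair ρ ρ' a b) (h' : Pair ρ ρ' a' b) : a' = a := by
  have hfin : (orbSet ρ (ptStab ρ a) a').Finite :=
    orb_comp ρ ρ' (ptStab ρ a) h.2 h'.1
  have : a' ∈ ({a} : Finset X) := by
    apply hNA {a} a'
    rwa [fixSet_singleton_eq]
  simpa using this

lemma pair_swap (ρ : G →* Equiv.Perm X) (ρ' : G →* Equiv.Perm X') {a : X} {b : X'}
    (h : Pair ρ ρ' a b) : Pair ρ' ρ b a := ⟨h.2, h.1⟩

/-- Conjugation: orbits transform under the diagonal action. -/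
lemma orb_conj {X₁ X₂ : Type*} (ρ₁ : G →* Equiv.Perm X₁) (ρ₂ : G →* Equiv.Perm X₂)
    (g : G) {x : X₁} {p : X₂}
    (h : (orbSet ρ₁ (ptStab ρ₂ p) x).Finite) :
    (orbSet ρ₁ (ptStab ρ₂ (ρ₂ g p)) (ρ₁ g x)).Finite := by
  apply (h.image (fun y => ρ₁ g y)).subset
  rintro y ⟨k, hk, rfl⟩
  have hkstab : g⁻¹ * k * g ∈ ptStab ρ₂ p := by
    show ρ₂ (g⁻¹ * k * g) p = p
    have hk' : ρ₂ k (ρ₂ g p) = ρ₂ g p := hk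
    rw [map_mul, map_mul, Equiv.Perm.mul_apply, Equiv.Perm.mul_apply, hk',
      map_inv, perm_inv_apply_self]
  refine ⟨ρ₁ (g⁻¹ * k * g) x, ⟨g⁻¹ * k * g, hkstab, rfl⟩, ?_⟩
  show ρ₁ g (ρ₁ (g⁻¹ * k * g) x) = ρ₁ k (ρ₁ g x)
  rw [← Equiv.Perm.mul_apply, ← Equiv.Perm.mul_apply, ← map_mul, ← map_mul]
  congr 1
  group

lemma pair_equivariant (ρ : G →* Equiv.Perm X) (ρ' : G →* Equiv.Perm X')
    {a : X} {b : X'} (g : G) (h : Pair ρ ρ' a b) :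
    Pair ρ ρ' (ρ g a) (ρ' g b) :=
  ⟨orb_conj ρ ρ' g h.1, orb_conj ρ' ρ g h.2⟩

/-- The key abstract theorem. -/
theorem keyThm (ρ : G →* Equiv.Perm X) (ρ' : G →* Equiv.Perm X')
    (hNA : NAh ρ) (hNA' : NAh ρ') (hSP : SPh ρ ρ') (hSP' : SPh ρ' ρ) :
    ∃ θ : X ≃ X', ∀ (g : G) (x : X), ρ' g (θ x) = θ (ρ g x) := by
  classical
  have htot : ∀ a : X, ∃ b : X', Pair ρ ρ' a b :=
    pair_total ρ ρ' hNA hNA' hSP hSP'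
  have htot' : ∀ b : X', ∃ a : X, Pair ρ ρ' a b := by
    intro b
    obtain ⟨a, ha⟩ := pair_total ρ' ρ hNA' hNA hSP' hSP b
    exact ⟨a, pair_swap ρ' ρ ha⟩
  set θ : X → X' := fun a => Classical.choose (htot a) with hθdef
  have hθ : ∀ a : X, Pair ρ ρ' a (θ a) := fun a => Classical.choose_spec (htot a)
  have hinj : Function.Injective θ := by
    intro a a' h
    have h2 : Pair ρ ρ' a' (θ a) := h ▸ hθ a'
    exact (pair_uniq_left ρ ρ' hNA (hθ a) h2).symm
  have hsurj : Function.Surjective θ := by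
    intro b
    obtain ⟨a, ha⟩ := htot' b
    exact ⟨a, (pair_uniq_right ρ ρ' hNA' (hθ a) ha).symm ▸ rfl⟩
  refine ⟨Equiv.ofBijective θ ⟨hinj, hsurj⟩, ?_⟩
  intro g x
  have h1 : Pair ρ ρ' (ρ g x) (ρ' g (θ x)) := pair_equivariant ρ ρ' g (hθ x)
  have h2 : Pair ρ ρ' (ρ g x) (θ (ρ g x)) := hθ (ρ g x)
  exact pair_uniq_right ρ ρ' hNA' h2 h1

end KeyThm

section Topo
variable {A Δ : Type*}

/-- If `U` is open in the topology induced from pointwise convergence and contains `a₀`,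
then it contains everything agreeing with `a₀` on some finite set. -/
lemma exists_fix_of_isOpen (c : A → Δ → Δ) (U : Set A)
    (hU : @IsOpen A (TopologicalSpace.induced c (FnTop Δ Δ)) U) {a₀ : A} (ha : a₀ ∈ U) :
    ∃ S : Finset Δ, ∀ a : A, (∀ x ∈ S, c a x = c a₀ x) → a ∈ U := by
  letI : TopologicalSpace Δ := ⊥
  haveI : DiscreteTopology Δ := ⟨rfl⟩
  obtain ⟨W, hW, hWU⟩ := (@isOpen_induced_iff A (Δ → Δ) (FnTop Δ Δ) U c).mp hU
  have hW' : IsOpen W := hW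
  have hmem : c a₀ ∈ W := by rw [← hWU] at ha; exact ha
  obtain ⟨I, u, hIu, hsub⟩ := isOpen_pi_iff.mp hW' (c a₀) hmem
  refine ⟨I, fun a hfix => ?_⟩
  have : c a ∈ W := by
    apply hsub
    intro x hx
    have := (hIu x hx).2
    rw [hfix x hx]
    exact this
  rw [← hWU]; exact this

/-- Point stabilisers are open in `FnTop`-induced topologies. -/
lemma isOpen_ptFix (c : A → Δ → Δ) (b : Δ) :
    @IsOpen A (TopologicalSpace.induced c (FnTop Δ Δ)) {a : A | c a b = b} := by
  letI : TopologicalSpace Δ := ⊥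
  haveI : DiscreteTopology Δ := ⟨rfl⟩
  rw [@isOpen_induced_iff A (Δ → Δ) (FnTop Δ Δ)]
  refine ⟨({b} : Set Δ).pi (fun _ => {b}), isOpen_set_pi (Set.finite_singleton b)
    (fun _ _ => isOpen_discrete _), ?_⟩
  ext a
  simp [Set.mem_pi]

end Topo

/-- Every topological group isomorphism between the automorphism groups of
ω-categorical structures without algebraicity is induced by a bijection of
the domains, i.e. is an isomorphism of permutation group actions. -/
theorem topological_group_iso_is_action_iso
    {Ω Ω' : Type} [Countable Ω] [Infinite Ω] [Countable Ω'] [Infinite Ω']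
    (L L' : FirstOrder.Language) [L.IsRelational] [L'.IsRelational]
    [L.Structure Ω] [L'.Structure Ω']
    (hAoligo : Oligo (autGroup L Ω : Set (Equiv.Perm Ω)))
    (hBoligo : Oligo (autGroup L' Ω' : Set (Equiv.Perm Ω')))
    (hAnoalg : NoAlg (autGroup L Ω : Set (Equiv.Perm Ω)))
    (hBnoalg : NoAlg (autGroup L' Ω' : Set (Equiv.Perm Ω')))
    (φ : autGroup L Ω ≃* autGroup L' Ω')
    (hφcont : @Continuous _ _ (autTop L Ω) (autTop L' Ω') ⇑φ)
    (hφsymmcont : @Continuous _ _ (autTop L' Ω') (autTop L Ω) ⇑φ.symm) :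
    ∃ θ : Ω ≃ Ω', ∀ (g : autGroup L Ω) (x : Ω'),
      (φ g : Equiv.Perm Ω') x = θ ((g : Equiv.Perm Ω) (θ.symm x)) := by
  classical
  set ρ : (autGroup L Ω) →* Equiv.Perm Ω := (autGroup L Ω).subtype with hρdef
  set ρ' : (autGroup L Ω) →* Equiv.Perm Ω' :=
    (autGroup L' Ω').subtype.comp φ.toMonoidHom with hρ'def
  -- transfer of no-algebraicity for ρ
  have hNAρ : NAh ρ := by
    intro S a hfin
    set n := S.card with hn
    set e := S.equivFin with he
    set y : Fin n → Ω := fun i => ((e.symm i : {x // x ∈ S}) : Ω) with hy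
    have hsub : {b | ∃ g ∈ (autGroup L Ω : Set (Equiv.Perm Ω)),
        (∀ i, g (y i) = y i) ∧ b = g a} ⊆ orbSet ρ (fixSet ρ S) a := by
      rintro x ⟨g, hg, hfix, rfl⟩
      refine ⟨⟨g, hg⟩, fun z hz => ?_, rfl⟩
      have hz' : y (e ⟨z, hz⟩) = z := by
        simp [hy]
      have := hfix (e ⟨z, hz⟩)
      rw [hz'] at this
      exact this
    obtain ⟨i, hi⟩ := hAnoalg n y a (hfin.subset hsub)
    rw [hi, hy]
    exact (e.symm i).2
  -- transfer of no-algebraicity for ρ'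
  have hNAρ' : NAh ρ' := by
    intro S b hfin
    set n := S.card with hn
    set e := S.equivFin with he
    set y : Fin n → Ω' := fun i => ((e.symm i : {x // x ∈ S}) : Ω') with hy
    have hsub : {b' | ∃ h ∈ (autGroup L' Ω' : Set (Equiv.Perm Ω')),
        (∀ i, h (y i) = y i) ∧ b' = h b} ⊆ orbSet ρ' (fixSet ρ' S) b := by
      rintro x ⟨h, hh, hfix, rfl⟩
      have hval : ρ' (φ.symm ⟨h, hh⟩) = h := by
        show ((φ (φ.symm ⟨h, hh⟩) : autGroup L' Ω') : Equiv.Perm Ω') = h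
        rw [MulEquiv.apply_symm_apply]
      refine ⟨φ.symm ⟨h, hh⟩, fun z hz => ?_, by rw [hval]⟩
      rw [hval]
      have hz' : y (e ⟨z, hz⟩) = z := by simp [hy]
      have := hfix (e ⟨z, hz⟩)
      rw [hz'] at this
      exact this
    obtain ⟨i, hi⟩ := hBnoalg n y b (hfin.subset hsub)
    rw [hi, hy]
    exact (e.symm i).2
  -- supports via continuity of φ
  have hSP : SPh ρ ρ' := by
    intro b
    have hUopen : @IsOpen (autGroup L' Ω') (autTop L' Ω')
        {h : (autGroup L' Ω') | (h : Equiv.Perm Ω') b = b} :=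
      isOpen_ptFix (fun h : (autGroup L' Ω') => ((h : Equiv.Perm Ω') : Ω' → Ω')) b
    have hpre : @IsOpen (autGroup L Ω) (autTop L Ω)
        (⇑φ ⁻¹' {h : (autGroup L' Ω') | (h : Equiv.Perm Ω') b = b}) :=
      (@continuous_def _ _ (autTop L Ω) (autTop L' Ω') ⇑φ).mp hφcont _ hUopen
    have h1 : (1 : (autGroup L Ω)) ∈ ⇑φ ⁻¹'
        {h : (autGroup L' Ω') | (h : Equiv.Perm Ω') b = b} := by
      simp [Set.mem_preimage, map_one]
    obtain ⟨S, hs⟩ := exists_fix_of_isOpen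
      (fun g : (autGroup L Ω) => ((g : Equiv.Perm Ω) : Ω → Ω)) _ hpre h1
    refine ⟨S, fun g hg => ?_⟩
    have : g ∈ ⇑φ ⁻¹' {h : (autGroup L' Ω') | (h : Equiv.Perm Ω') b = b} := by
      apply hs g
      intro x hx
      have := hg x hx
      exact this
    exact this
  -- supports via continuity of φ.symm
  have hSP' : SPh ρ' ρ := by
    intro a
    have hUopen : @IsOpen (autGroup L Ω) (autTop L Ω)
        {g : (autGroup L Ω) | (g : Equiv.Perm Ω) a = a} :=
      isOpen_ptFix (fun g : (autGroup L Ω) => ((g : Equiv.Perm Ω) : Ω → Ω)) a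
    have hpre : @IsOpen (autGroup L' Ω') (autTop L' Ω')
        (⇑φ.symm ⁻¹' {g : (autGroup L Ω) | (g : Equiv.Perm Ω) a = a}) :=
      (@continuous_def _ _ (autTop L' Ω') (autTop L Ω) ⇑φ.symm).mp hφsymmcont _ hUopen
    have h1 : (1 : (autGroup L' Ω')) ∈ ⇑φ.symm ⁻¹'
        {g : (autGroup L Ω) | (g : Equiv.Perm Ω) a = a} := by
      simp [Set.mem_preimage, map_one]
    obtain ⟨T, hs⟩ := exists_fix_of_isOpen
      (fun h : (autGroup L' Ω') => ((h : Equiv.Perm Ω') : Ω' → Ω')) _ hpre h1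
    refine ⟨T, fun g hg => ?_⟩
    have hmem : φ g ∈ ⇑φ.symm ⁻¹' {g : (autGroup L Ω) | (g : Equiv.Perm Ω) a = a} := by
      apply hs (φ g)
      intro y hy
      have := hg y hy
      exact this
    have : (((φ.symm (φ g)) : autGroup L Ω) : Equiv.Perm Ω) a = a := hmem
    rw [MulEquiv.symm_apply_apply] at this
    exact this
  obtain ⟨θ, hθ⟩ := keyThm ρ ρ' hNAρ hNAρ' hSP hSP'
  refine ⟨θ, fun g x => ?_⟩
  have := hθ g (θ.symm x)
  rw [Equiv.apply_symm_apply] at this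
  exact this
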